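/- Let P(m₁,m₂) = {(p₁,p₂,p₃) ∈ ℝ³_{≥0} : p₁ ≤ m₁, p₃ ≤ m₂, p₁+p₂+p₃ ≤ m₁+m₂} be the type A₂ Dyck-path polytope. Then P(m₁, m₂) is a normal lattice polytope: its vertices have integer coordinates, and for every n ≥ 1 the lattice points of nP(m₁,m₂) = P(nm₁, nm₂) coincide with the n-fold Minkowski sum of the lattice points of P(m₁,m₂). -/

import Mathlib

open scoped Pointwise

/-- The type `A₂` Dyck-path polytope `P(m₁, m₂) ⊂ ℝ³_{≥0}`. -/
def polyA2 (m₁ m₂ : ℕ) : Set (Fin 3 → ℝ) :=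
  {p | (∀ i, 0 ≤ p i) ∧ p 0 ≤ (m₁ : ℝ) ∧ p 2 ≤ (m₂ : ℝ) ∧
    p 0 + p 1 + p 2 ≤ (m₁ : ℝ) + (m₂ : ℝ)}

/-- The set of lattice points of `P(m₁, m₂)`. -/
def latticeA2 (m₁ m₂ : ℕ) : Set (Fin 3 → ℤ) :=
  {p | (fun i => (p i : ℝ)) ∈ polyA2 m₁ m₂}


lemma latt_iff {m₁ m₂ : ℕ} {p : Fin 3 → ℤ} :
    p ∈ latticeA2 m₁ m₂ ↔
      (∀ i, 0 ≤ p i) ∧ p 0 ≤ (m₁ : ℤ) ∧ p 2 ≤ (m₂ : ℤ) ∧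
        p 0 + p 1 + p 2 ≤ (m₁ : ℤ) + m₂ := by
  unfold latticeA2 polyA2
  simp only [Set.mem_setOf_eq]
  constructor
  · rintro ⟨h0, h1, h2, h3⟩
    exact ⟨fun i => by exact_mod_cast h0 i, by exact_mod_cast h1, by exact_mod_cast h2,
      by exact_mod_cast h3⟩
  · rintro ⟨h0, h1, h2, h3⟩
    exact ⟨fun i => by exact_mod_cast h0 i, by exact_mod_cast h1, by exact_mod_cast h2,
      by exact_mod_cast h3⟩

lemma poly_convex (m₁ m₂ : ℕ) : Convex ℝ (polyA2 m₁ m₂) := by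
  rintro p ⟨hp0, hp1, hp2, hp3⟩ q ⟨hq0, hq1, hq2, hq3⟩ a b ha hb hab
  refine ⟨fun i => ?_, ?_, ?_, ?_⟩ <;>
    simp only [Pi.add_apply, Pi.smul_apply, smul_eq_mul]
  · have := hp0 i; have := hq0 i; nlinarith
  · nlinarith
  · nlinarith
  · nlinarith

lemma img_sub (m₁ m₂ : ℕ) :
    (fun p i => ((p i : ℝ))) '' latticeA2 m₁ m₂ ⊆ polyA2 m₁ m₂ := by
  rintro _ ⟨q, hq, rfl⟩
  exact hq

lemma poly_split (a b c d : ℕ) :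
    polyA2 (a + c) (b + d) = polyA2 a b + polyA2 c d := by
  ext p
  rw [Set.mem_add]
  constructor
  · rintro ⟨h0, h1, h2, h3⟩
    push_cast at h1 h2 h3
    set x0 := min (p 0) (a : ℝ) with hx0def
    set x2 := min (p 2) (b : ℝ) with hx2def
    set x1 := max 0 (p 0 + p 1 + p 2 - x0 - x2 - ((c : ℝ) + d)) with hx1def
    have hca : (0:ℝ) ≤ c := Nat.cast_nonneg c
    have hdb : (0:ℝ) ≤ d := Nat.cast_nonneg d
    have f1 : 0 ≤ x0 := le_min (h0 0) (Nat.cast_nonneg a)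
    have f2 : x0 ≤ a := min_le_right _ _
    have f3 : x0 ≤ p 0 := min_le_left _ _
    have f4 : p 0 - x0 ≤ c := by
      rcases le_total (p 0) (a : ℝ) with h | h
      · have : x0 = p 0 := min_eq_left h; linarith
      · have : x0 = (a:ℝ) := min_eq_right h; linarith
    have g1 : 0 ≤ x2 := le_min (h0 2) (Nat.cast_nonneg b)
    have g2 : x2 ≤ b := min_le_right _ _
    have g3 : x2 ≤ p 2 := min_le_left _ _
    have g4 : p 2 - x2 ≤ d := by
      rcases le_total (p 2) (b : ℝ) with h | h
      · have : x2 = p 2 := min_eq_left h; linarith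
      · have : x2 = (b:ℝ) := min_eq_right h; linarith
    have k1 : 0 ≤ x1 := le_max_left _ _
    have k2 : x1 ≤ p 1 := max_le (h0 1) (by linarith)
    have k3 : x1 ≤ (a:ℝ) + b - x0 - x2 := max_le (by linarith) (by linarith)
    have k4 : p 0 + p 1 + p 2 - x0 - x2 - ((c:ℝ) + d) ≤ x1 := le_max_right _ _
    refine ⟨![x0, x1, x2], ⟨fun i => ?_, ?_, ?_, ?_⟩,
      fun i => p i - ![x0, x1, x2] i, ⟨fun i => ?_, ?_, ?_, ?_⟩, ?_⟩
    · fin_cases i <;> simpa using by assumption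
    · simpa using f2
    · simpa using g2
    · simp only [Matrix.cons_val_zero, Matrix.cons_val_one, Matrix.head_cons,
        Matrix.cons_val_two, Matrix.tail_cons]
      linarith
    · fin_cases i <;> simp <;> linarith
    · simpa using f4
    · simpa using g4
    · simp only [Matrix.cons_val_zero, Matrix.cons_val_one, Matrix.head_cons,
        Matrix.cons_val_two, Matrix.tail_cons]
      linarith
    · funext i
      simp [Pi.add_apply]
  · rintro ⟨x, ⟨hx0, hx1, hx2, hx3⟩, y, ⟨hy0, hy1, hy2, hy3⟩, rfl⟩
    refine ⟨fun i => ?_, ?_, ?_, ?_⟩ <;> simp only [Pi.add_apply] <;> push_cast <;>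
      [skip; linarith; linarith; linarith]
    exact add_nonneg (hx0 i) (hy0 i)

lemma latt_split (a b c d : ℕ) :
    latticeA2 (a + c) (b + d) = latticeA2 a b + latticeA2 c d := by
  ext p
  rw [Set.mem_add, latt_iff]
  constructor
  · rintro ⟨h0, h1, h2, h3⟩
    push_cast at h1 h2 h3
    set x0 := min (p 0) (a : ℤ) with hx0def
    set x2 := min (p 2) (b : ℤ) with hx2def
    set x1 := max 0 (p 0 + p 1 + p 2 - x0 - x2 - ((c : ℤ) + d)) with hx1def
    have hca : (0:ℤ) ≤ c := Int.natCast_nonneg c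
    have hdb : (0:ℤ) ≤ d := Int.natCast_nonneg d
    have f1 : 0 ≤ x0 := le_min (h0 0) (Int.natCast_nonneg a)
    have f2 : x0 ≤ a := min_le_right _ _
    have f3 : x0 ≤ p 0 := min_le_left _ _
    have f4 : p 0 - x0 ≤ c := by
      rcases le_total (p 0) (a : ℤ) with h | h
      · have : x0 = p 0 := min_eq_left h; linarith
      · have : x0 = (a:ℤ) := min_eq_right h; linarith
    have g1 : 0 ≤ x2 := le_min (h0 2) (Int.natCast_nonneg b)
    have g2 : x2 ≤ b := min_le_right _ _
    have g3 : x2 ≤ p 2 := min_le_left _ _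
    have g4 : p 2 - x2 ≤ d := by
      rcases le_total (p 2) (b : ℤ) with h | h
      · have : x2 = p 2 := min_eq_left h; linarith
      · have : x2 = (b:ℤ) := min_eq_right h; linarith
    have k1 : 0 ≤ x1 := le_max_left _ _
    have k2 : x1 ≤ p 1 := max_le (h0 1) (by linarith)
    have k3 : x1 ≤ (a:ℤ) + b - x0 - x2 := max_le (by linarith) (by linarith)
    have k4 : p 0 + p 1 + p 2 - x0 - x2 - ((c:ℤ) + d) ≤ x1 := le_max_right _ _
    refine ⟨![x0, x1, x2], latt_iff.mpr ⟨fun i => ?_, ?_, ?_, ?_⟩,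
      fun i => p i - ![x0, x1, x2] i, latt_iff.mpr ⟨fun i => ?_, ?_, ?_, ?_⟩, ?_⟩
    · fin_cases i <;> simpa using by assumption
    · simpa using f2
    · simpa using g2
    · simp only [Matrix.cons_val_zero, Matrix.cons_val_one, Matrix.head_cons,
        Matrix.cons_val_two, Matrix.tail_cons]
      linarith
    · fin_cases i <;> simp <;> linarith
    · simpa using f4
    · simpa using g4
    · simp only [Matrix.cons_val_zero, Matrix.cons_val_one, Matrix.head_cons,
        Matrix.cons_val_two, Matrix.tail_cons]
      linarith
    · funext i
      simp [Pi.add_apply]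
  · rintro ⟨x, hx, y, hy, rfl⟩
    rw [latt_iff] at hx hy
    obtain ⟨hx0, hx1, hx2, hx3⟩ := hx
    obtain ⟨hy0, hy1, hy2, hy3⟩ := hy
    refine ⟨fun i => ?_, ?_, ?_, ?_⟩ <;> simp only [Pi.add_apply] <;> push_cast <;>
      [skip; linarith; linarith; linarith]
    exact add_nonneg (hx0 i) (hy0 i)


lemma hull_sub (m₁ m₂ : ℕ) :
    convexHull ℝ ((fun p i => ((p i : ℝ))) '' latticeA2 m₁ m₂) ⊆ polyA2 m₁ m₂ :=
  convexHull_min (img_sub m₁ m₂) (poly_convex m₁ m₂)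

lemma vmem (m₁ m₂ : ℕ) (q : Fin 3 → ℤ)
    (h0 : ∀ i, 0 ≤ q i) (h1 : q 0 ≤ (m₁ : ℤ)) (h2 : q 2 ≤ (m₂ : ℤ))
    (h3 : q 0 + q 1 + q 2 ≤ (m₁ : ℤ) + m₂) :
    (fun i => ((q i : ℝ))) ∈ (fun p i => ((p i : ℝ))) '' latticeA2 m₁ m₂ :=
  ⟨q, latt_iff.mpr ⟨h0, h1, h2, h3⟩, rfl⟩

lemma tri10 : polyA2 1 0 = convexHull ℝ ((fun p i => ((p i : ℝ))) '' latticeA2 1 0) := by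
  refine Set.Subset.antisymm ?_ (hull_sub 1 0)
  rintro p ⟨h0, h1, h2, h3⟩
  push_cast at h1 h2 h3
  have hp2 : p 2 = 0 := le_antisymm h2 (h0 2)
  set z : Fin 3 → (Fin 3 → ℝ) :=
    ![fun i => ((![0,0,0] i : ℤ) : ℝ), fun i => ((![1,0,0] i : ℤ) : ℝ),
      fun i => ((![0,1,0] i : ℤ) : ℝ)] with hz
  set w : Fin 3 → ℝ := ![1 - p 0 - p 1, p 0, p 1] with hw
  have hwnn : ∀ j ∈ Finset.univ, 0 ≤ w j := by
    intro j _
    fin_cases j <;> simp [hw] <;> linarith [h0 0, h0 1]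
  have hwsum : ∑ j : Fin 3, w j = 1 := by
    simp [hw, Fin.sum_univ_three]; ring
  have hzmem : ∀ j ∈ Finset.univ, z j ∈ (fun p i => ((p i : ℝ))) '' latticeA2 1 0 := by
    intro j _
    fin_cases j
    · exact vmem 1 0 ![0,0,0] (fun i => by fin_cases i <;> norm_num) (by norm_num)
        (by norm_num [Matrix.cons_val_two, Matrix.tail_cons, Matrix.head_cons])
        (by norm_num [Matrix.cons_val_two, Matrix.tail_cons, Matrix.head_cons])
    · exact vmem 1 0 ![1,0,0] (fun i => by fin_cases i <;> norm_num) (by norm_num)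
        (by norm_num [Matrix.cons_val_two, Matrix.tail_cons, Matrix.head_cons])
        (by norm_num [Matrix.cons_val_two, Matrix.tail_cons, Matrix.head_cons])
    · exact vmem 1 0 ![0,1,0] (fun i => by fin_cases i <;> norm_num) (by norm_num)
        (by norm_num [Matrix.cons_val_two, Matrix.tail_cons, Matrix.head_cons])
        (by norm_num [Matrix.cons_val_two, Matrix.tail_cons, Matrix.head_cons])
  have hmem := Finset.centerMass_mem_convexHull Finset.univ hwnn (by rw [hwsum]; norm_num) hzmem
  have hcm : Finset.univ.centerMass w z = p := by
    rw [Finset.centerMass_eq_of_sum_1 _ _ hwsum]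
    rw [Fin.sum_univ_three]
    funext i
    fin_cases i <;> simp [hw, hz, hp2]
  rwa [hcm] at hmem

lemma tri01 : polyA2 0 1 = convexHull ℝ ((fun p i => ((p i : ℝ))) '' latticeA2 0 1) := by
  refine Set.Subset.antisymm ?_ (hull_sub 0 1)
  rintro p ⟨h0, h1, h2, h3⟩
  push_cast at h1 h2 h3
  have hp0 : p 0 = 0 := le_antisymm h1 (h0 0)
  set z : Fin 3 → (Fin 3 → ℝ) :=
    ![fun i => ((![0,0,0] i : ℤ) : ℝ), fun i => ((![0,1,0] i : ℤ) : ℝ),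
      fun i => ((![0,0,1] i : ℤ) : ℝ)] with hz
  set w : Fin 3 → ℝ := ![1 - p 1 - p 2, p 1, p 2] with hw
  have hwnn : ∀ j ∈ Finset.univ, 0 ≤ w j := by
    intro j _
    fin_cases j <;> simp [hw] <;> linarith [h0 1, h0 2]
  have hwsum : ∑ j : Fin 3, w j = 1 := by
    simp [hw, Fin.sum_univ_three]; ring
  have hzmem : ∀ j ∈ Finset.univ, z j ∈ (fun p i => ((p i : ℝ))) '' latticeA2 0 1 := by
    intro j _
    fin_cases j
    · exact vmem 0 1 ![0,0,0] (fun i => by fin_cases i <;> norm_num) (by norm_num)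
        (by norm_num [Matrix.cons_val_two, Matrix.tail_cons, Matrix.head_cons])
        (by norm_num [Matrix.cons_val_two, Matrix.tail_cons, Matrix.head_cons])
    · exact vmem 0 1 ![0,1,0] (fun i => by fin_cases i <;> norm_num) (by norm_num)
        (by norm_num [Matrix.cons_val_two, Matrix.tail_cons, Matrix.head_cons])
        (by norm_num [Matrix.cons_val_two, Matrix.tail_cons, Matrix.head_cons])
    · exact vmem 0 1 ![0,0,1] (fun i => by fin_cases i <;> norm_num) (by norm_num)
        (by norm_num [Matrix.cons_val_two, Matrix.tail_cons, Matrix.head_cons])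
        (by norm_num [Matrix.cons_val_two, Matrix.tail_cons, Matrix.head_cons])
  have hmem := Finset.centerMass_mem_convexHull Finset.univ hwnn (by rw [hwsum]; norm_num) hzmem
  have hcm : Finset.univ.centerMass w z = p := by
    rw [Finset.centerMass_eq_of_sum_1 _ _ hwsum]
    rw [Fin.sum_univ_three]
    funext i
    fin_cases i <;> simp [hw, hz, hp0]
  rwa [hcm] at hmem

lemma poly00 : polyA2 0 0 = convexHull ℝ ((fun p i => ((p i : ℝ))) '' latticeA2 0 0) := by
  have h1 : polyA2 0 0 = {fun _ => (0:ℝ)} := by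
    ext p
    constructor
    · rintro ⟨h0, h1, h2, h3⟩
      push_cast at h1 h2 h3
      have := h0 0; have := h0 1; have := h0 2
      have hp0 : p 0 = 0 := by linarith
      have hp2 : p 2 = 0 := by linarith
      have hp1 : p 1 = 0 := by linarith
      funext i
      fin_cases i <;> assumption
    · rintro rfl
      exact ⟨fun i => le_refl 0, by norm_num, by norm_num, by norm_num⟩
  have h2 : (fun p i => ((p i : ℝ))) '' latticeA2 0 0 = {fun _ => (0:ℝ)} := by
    ext q
    constructor
    · rintro ⟨r, hr, rfl⟩
      rw [latt_iff] at hr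
      obtain ⟨h0, ha, hb, hc⟩ := hr
      have := h0 0; have := h0 1; have := h0 2
      have e0 : r 0 = 0 := by omega
      have e2 : r 2 = 0 := by omega
      have e1 : r 1 = 0 := by omega
      funext i
      fin_cases i <;> simp [e0, e1, e2]
    · rintro rfl
      exact ⟨fun _ => 0, latt_iff.mpr ⟨fun i => le_refl 0, by norm_num, by norm_num, by norm_num⟩,
        by funext i; simp⟩
  rw [h1, h2, convexHull_singleton]


lemma latt_add {a b c d : ℕ} {x y : Fin 3 → ℤ}
    (hx : x ∈ latticeA2 a b) (hy : y ∈ latticeA2 c d) :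
    x + y ∈ latticeA2 (a + c) (b + d) := by
  rw [latt_iff] at hx hy ⊢
  obtain ⟨hx0, hx1, hx2, hx3⟩ := hx
  obtain ⟨hy0, hy1, hy2, hy3⟩ := hy
  refine ⟨fun i => add_nonneg (hx0 i) (hy0 i), ?_, ?_, ?_⟩ <;>
    simp only [Pi.add_apply] <;> push_cast <;> linarith

lemma img_add_sub (a b c d : ℕ) :
    (fun p i => ((p i : ℝ))) '' latticeA2 a b + (fun p i => ((p i : ℝ))) '' latticeA2 c d ⊆
      (fun p i => ((p i : ℝ))) '' latticeA2 (a + c) (b + d) := by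
  rw [Set.add_subset_iff]
  rintro _ ⟨x, hx, rfl⟩ _ ⟨y, hy, rfl⟩
  exact ⟨x + y, latt_add hx hy, by funext i; simp [Pi.add_apply]⟩

lemma step (a b c d : ℕ)
    (h1 : polyA2 a b = convexHull ℝ ((fun p i => ((p i : ℝ))) '' latticeA2 a b))
    (h2 : polyA2 c d = convexHull ℝ ((fun p i => ((p i : ℝ))) '' latticeA2 c d)) :
    polyA2 (a + c) (b + d) =
      convexHull ℝ ((fun p i => ((p i : ℝ))) '' latticeA2 (a + c) (b + d)) := by
  refine Set.Subset.antisymm ?_ (hull_sub _ _)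
  rw [poly_split, h1, h2, ← convexHull_add]
  exact convexHull_mono (img_add_sub a b c d)

lemma main1 : ∀ m₁ m₂ : ℕ,
    polyA2 m₁ m₂ = convexHull ℝ ((fun p i => ((p i : ℝ))) '' latticeA2 m₁ m₂) := by
  intro m₁
  induction m₁ with
  | zero =>
    intro m₂
    induction m₂ with
    | zero => exact poly00
    | succ k ih => exact step 0 k 0 1 ih tri01
  | succ m ih =>
    intro m₂
    exact step m m₂ 1 0 (ih m₂) tri10

lemma sum_mem_latt (m₁ m₂ n : ℕ) (f : Fin n → (Fin 3 → ℤ))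
    (hf : ∀ i, f i ∈ latticeA2 m₁ m₂) :
    (∑ i, f i) ∈ latticeA2 (n * m₁) (n * m₂) := by
  have h := fun i => latt_iff.mp (hf i)
  rw [latt_iff]
  refine ⟨fun j => ?_, ?_, ?_, ?_⟩ <;> simp only [Finset.sum_apply]
  · exact Finset.sum_nonneg fun i _ => (h i).1 j
  · calc ∑ i, f i 0 ≤ ∑ _i : Fin n, (m₁ : ℤ) := Finset.sum_le_sum fun i _ => (h i).2.1
      _ = ((n * m₁ : ℕ) : ℤ) := by
        simp [Finset.sum_const, Finset.card_fin, nsmul_eq_mul]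
  · calc ∑ i, f i 2 ≤ ∑ _i : Fin n, (m₂ : ℤ) := Finset.sum_le_sum fun i _ => (h i).2.2.1
      _ = ((n * m₂ : ℕ) : ℤ) := by
        simp [Finset.sum_const, Finset.card_fin, nsmul_eq_mul]
  · rw [← Finset.sum_add_distrib, ← Finset.sum_add_distrib]
    calc ∑ i, (f i 0 + f i 1 + f i 2) ≤ ∑ _i : Fin n, ((m₁ : ℤ) + m₂) :=
        Finset.sum_le_sum fun i _ => (h i).2.2.2
      _ = ((n * m₁ : ℕ) : ℤ) + ((n * m₂ : ℕ) : ℤ) := by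
        simp [Finset.sum_const, Finset.card_fin, nsmul_eq_mul]; ring

lemma decomp (m₁ m₂ : ℕ) : ∀ n, 1 ≤ n → ∀ y ∈ latticeA2 (n * m₁) (n * m₂),
    ∃ f : Fin n → (Fin 3 → ℤ), (∀ i, f i ∈ latticeA2 m₁ m₂) ∧ y = ∑ i, f i := by
  intro n hn
  induction n, hn using Nat.le_induction with
  | base =>
    intro y hy
    refine ⟨fun _ => y, fun _ => by simpa using hy, ?_⟩
    simp
  | succ n hn ih =>
    intro y hy
    have e1 : (n + 1) * m₁ = m₁ + n * m₁ := by ring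
    have e2 : (n + 1) * m₂ = m₂ + n * m₂ := by ring
    rw [e1, e2, latt_split] at hy
    rw [Set.mem_add] at hy
    obtain ⟨x, hx, z, hz, hxz⟩ := hy
    obtain ⟨g, hg, rfl⟩ := ih z hz
    refine ⟨Fin.cons x g, fun i => ?_, ?_⟩
    · refine Fin.cases ?_ ?_ i
      · simpa using hx
      · intro j; simpa using hg j
    · rw [Fin.sum_cons]
      exact hxz.symm

/-- `P(m₁, m₂)` is a normal lattice polytope: it is the convex hull
of its lattice points (so in particular all its vertices are integral), and for
every `n ≥ 1` the lattice points of `nP(m₁,m₂) = P(nm₁, nm₂)` coincide with the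
`n`-fold Minkowski sum of the lattice points of `P(m₁, m₂)`. -/
theorem stmt18 (m₁ m₂ : ℕ) :
    polyA2 m₁ m₂ = convexHull ℝ ((fun p i => ((p i : ℝ))) '' latticeA2 m₁ m₂) ∧
    ∀ n : ℕ, 1 ≤ n →
      latticeA2 (n * m₁) (n * m₂) =
        {y | ∃ f : Fin n → (Fin 3 → ℤ),
          (∀ i, f i ∈ latticeA2 m₁ m₂) ∧ y = ∑ i, f i} := by
  refine ⟨main1 m₁ m₂, fun n hn => ?_⟩
  ext y
  simp only [Set.mem_setOf_eq]
  constructor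
  · exact decomp m₁ m₂ n hn y
  · rintro ⟨f, hf, rfl⟩
    exact sum_mem_latt m₁ m₂ n f hf
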